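/- Under the hypotheses of the reduced ODE system (p = 2 case): c₀'(t) = -ελ a₀'(ερ₀(t)) c₀(t)², ρ₀'(t) = c₀(t), c₀(0)=1, ρ₀(0) = -ε^{-1-δ₀}, with a₀ bounded, a₀' of one fixed sign and exponentially decaying, a₀(x) → a_∞ as x → +∞: the solution satisfies ρ₀(t) → +∞ as t → +∞ and c₀(t) → e^{-λ(a_∞ - a₀(-ε^{-δ₀}))} as t → +∞. -/

import Mathlib

open Real Filter

theorem parameter_ODE_asymptotics
    (a₀ : ℝ → ℝ) (aInf C γ ε lam δ₀ : ℝ) (c₀ ρ₀ : ℝ → ℝ)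
    (ha : ContDiff ℝ 1 a₀) (hbdd : ∃ M, ∀ x, |a₀ x| ≤ M)
    (hC : 0 < C) (hγ : 0 < γ)
    (hdecay : ∀ x, |deriv a₀ x| ≤ C * Real.exp (-γ * |x|))
    (hsign : (∀ x, 0 < deriv a₀ x) ∨ (∀ x, deriv a₀ x < 0))
    (hlim : Tendsto a₀ atTop (nhds aInf))
    (hε : 0 < ε) (hlam : 0 < lam) (hδ₀ : 0 < δ₀)
    (hODE : ∀ t ≥ (0:ℝ),
      HasDerivAt c₀ (-ε * lam * deriv a₀ (ε * ρ₀ t) * (c₀ t) ^ 2) t ∧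
      HasDerivAt ρ₀ (c₀ t) t)
    (hc0 : c₀ 0 = 1) (hρ0 : ρ₀ 0 = -ε ^ (-(1 + δ₀))) :
    Tendsto ρ₀ atTop atTop ∧
    Tendsto c₀ atTop (nhds (Real.exp (-lam * (aInf - a₀ (-ε ^ (-δ₀)))))) := by
  obtain ⟨M, hM⟩ := hbdd
  have hM0 : 0 ≤ M := le_trans (abs_nonneg _) (hM 0)
  have hdiff : Differentiable ℝ a₀ := ha.differentiable one_ne_zero
  set g : ℝ → ℝ := fun t => c₀ t * Real.exp (lam * a₀ (ε * ρ₀ t)) with hg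
  have hgderiv : ∀ t ≥ (0:ℝ), HasDerivAt g 0 t := by
    intro t ht
    obtain ⟨hc, hρ⟩ := hODE t ht
    have h1 : HasDerivAt (fun s => ε * ρ₀ s) (ε * c₀ t) t := hρ.const_mul ε
    have h2 : HasDerivAt a₀ (deriv a₀ (ε * ρ₀ t)) (ε * ρ₀ t) :=
      (hdiff (ε * ρ₀ t)).hasDerivAt
    have h3 : HasDerivAt (fun s => a₀ (ε * ρ₀ s))
        (deriv a₀ (ε * ρ₀ t) * (ε * c₀ t)) t := h2.comp t h1
    have h4 : HasDerivAt (fun s => Real.exp (lam * a₀ (ε * ρ₀ s)))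
        (Real.exp (lam * a₀ (ε * ρ₀ t)) * (lam * (deriv a₀ (ε * ρ₀ t) * (ε * c₀ t)))) t :=
      (h3.const_mul lam).exp
    have h5 : HasDerivAt (fun s => c₀ s * Real.exp (lam * a₀ (ε * ρ₀ s))) _ t := hc.mul h4
    convert h5 using 1
    ring
  have hconst : ∀ t ≥ (0:ℝ), g t = g 0 := by
    intro t ht
    have hcont : ContinuousOn g (Set.Icc 0 t) := fun x hx =>
      (hgderiv x hx.1).continuousAt.continuousWithinAt
    have hder : ∀ x ∈ Set.Ico (0:ℝ) t, HasDerivWithinAt g 0 (Set.Ici x) x := fun x hx =>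
      (hgderiv x hx.1).hasDerivWithinAt
    exact constant_of_has_deriv_right_zero hcont hder t (Set.right_mem_Icc.2 ht)
  have key : ∀ t ≥ (0:ℝ), c₀ t = Real.exp (lam * (a₀ (ε * ρ₀ 0) - a₀ (ε * ρ₀ t))) := by
    intro t ht
    have h := hconst t ht
    simp only [hg, hc0, one_mul] at h
    have hexp : Real.exp (lam * a₀ (ε * ρ₀ t)) ≠ 0 := (Real.exp_pos _).ne'
    have : c₀ t = Real.exp (lam * a₀ (ε * ρ₀ 0)) / Real.exp (lam * a₀ (ε * ρ₀ t)) := by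
      rw [eq_div_iff hexp]; exact h
    rw [this, ← Real.exp_sub]
    ring_nf
  set cm : ℝ := Real.exp (-(2 * lam * M)) with hcm
  have hcmpos : 0 < cm := Real.exp_pos _
  have hlb : ∀ t ≥ (0:ℝ), cm ≤ c₀ t := by
    intro t ht
    rw [key t ht]
    apply Real.exp_le_exp.2
    have h1 := abs_le.1 (hM (ε * ρ₀ 0))
    have h2 := abs_le.1 (hM (ε * ρ₀ t))
    nlinarith [hlam.le]
  -- linear growth of ρ₀
  have hmono : MonotoneOn (fun t => ρ₀ t - cm * t) (Set.Ici (0:ℝ)) := by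
    apply monotoneOn_of_deriv_nonneg (convex_Ici 0)
    · exact fun x hx => (((hODE x hx).2.sub ((hasDerivAt_id x).const_mul cm)).continuousAt).continuousWithinAt
    · intro x hx
      rw [interior_Ici] at hx
      exact (((hODE x hx.le).2.sub ((hasDerivAt_id x).const_mul cm))).differentiableAt.differentiableWithinAt
    · intro x hx
      rw [interior_Ici] at hx
      have hD : HasDerivAt (fun t => ρ₀ t - cm * t) (c₀ x - cm) x := by
        exact ((hODE x hx.le).2.sub ((hasDerivAt_id x).const_mul cm)).congr_deriv (by ring)
      rw [hD.deriv]
      linarith [hlb x hx.le]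
  have hgrow : ∀ t ≥ (0:ℝ), ρ₀ 0 + cm * t ≤ ρ₀ t := by
    intro t ht
    have := hmono (Set.self_mem_Ici) (Set.mem_Ici.2 ht) ht
    simp only [mul_zero, sub_zero] at this
    linarith
  have hρtop : Tendsto ρ₀ atTop atTop := by
    have hlin : Tendsto (fun t => ρ₀ 0 + cm * t) atTop atTop :=
      tendsto_atTop_add_const_left _ _ (tendsto_id.const_mul_atTop hcmpos)
    exact tendsto_atTop_mono' atTop (eventually_atTop.2 ⟨0, fun t ht => hgrow t ht⟩) hlin
  refine ⟨hρtop, ?_⟩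
  have hA0 : ε * ρ₀ 0 = -ε ^ (-δ₀) := by
    rw [hρ0, mul_neg]
    congr 1
    rw [mul_comm, ← Real.rpow_add_one hε.ne']
    congr 1
    ring
  have hεa : Tendsto (fun t => ε * ρ₀ t) atTop atTop := hρtop.const_mul_atTop hε
  have halim : Tendsto (fun t => a₀ (ε * ρ₀ t)) atTop (nhds aInf) := hlim.comp hεa
  have hfinal : Tendsto (fun t => Real.exp (lam * (a₀ (ε * ρ₀ 0) - a₀ (ε * ρ₀ t)))) atTop
      (nhds (Real.exp (lam * (a₀ (ε * ρ₀ 0) - aInf)))) :=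
    (Real.continuous_exp.tendsto _).comp ((tendsto_const_nhds.sub halim).const_mul lam)
  have heq : lam * (a₀ (ε * ρ₀ 0) - aInf) = -lam * (aInf - a₀ (-ε ^ (-δ₀))) := by
    rw [hA0]; ring
  rw [heq] at hfinal
  exact hfinal.congr' (eventually_atTop.2 ⟨0, fun t ht => (key t ht).symm⟩)
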